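/- arXiv:2104.09295 — 5 statements merged into one kernel-verified Lean document; each statement's English description precedes it below -/
import Mathlib

section
/- Let χ be a multiplicative character on Z/p^m, m ≥ 2, p an odd prime, with χ̂(1) ≠ 0. Then χ̂(a) = 0 for every a not in U(p^m); consequently χ̂(a) = G(χ)·χ*(a) for all a in Z/p^m, i.e., χ is primitive. -/
open Finset

/-- The `N`-point discrete Fourier transform of `x : ZMod N → ℂ`. -/
noncomputable def dft {N : ℕ} [NeZero N] (x : ZMod N → ℂ) (a : ZMod N) : ℂ :=
  ∑ b : ZMod N, x b * Complex.exp (2 * Real.pi * Complex.I * ((a.val * b.val : ℕ) : ℂ) / (N : ℂ))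

lemma dft_eq_gauss {N : ℕ} [NeZero N] (x : ZMod N → ℂ) (a : ZMod N) :
    dft x a = ∑ b : ZMod N, x b * ZMod.stdAddChar (a * b) := by
  unfold dft
  refine Finset.sum_congr rfl fun b _ => ?_
  congr 1
  have h1 : a * b = (((a.val * b.val : ℕ) : ℤ) : ZMod N) := by
    push_cast [ZMod.natCast_val, ZMod.cast_id]
    ring
  rw [h1, ZMod.stdAddChar_coe]
  push_cast
  ring_nf

lemma one_add_pow_of_sq_zero {R : Type*} [CommRing R] {c : R} (hc : c * c = 0) (k : ℕ) :
    (1 + c) ^ k = 1 + (k : R) * c := by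
  induction k with
  | zero => simp
  | succ n ih =>
    rw [pow_succ, ih]
    have h2 : c ^ 2 = 0 := by rw [sq, hc]
    push_cast
    ring_nf
    rw [h2]
    ring

theorem stmt3 (p : ℕ) [Fact p.Prime] (hp : p ≠ 2) (m : ℕ) (hm : 2 ≤ m)
    (χ : MulChar (ZMod (p ^ m)) ℂ) (h : dft ⇑χ 1 ≠ 0) :
    (∀ a : ZMod (p ^ m), ¬IsUnit a → dft ⇑χ a = 0) ∧
    (∀ a : ZMod (p ^ m), dft ⇑χ a = dft ⇑χ 1 * χ⁻¹ a) := by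
  have hp' : p.Prime := Fact.out
  have hN : (p ^ m : ℕ) = p ^ m := rfl
  let N := p ^ m
  set ψ : AddChar (ZMod N) ℂ := ZMod.stdAddChar with hψ
  set c : ZMod N := (p : ZMod N) ^ (m - 1) with hc
  have hpm0 : ((p : ZMod N)) ^ m = 0 := by
    have : ((p ^ m : ℕ) : ZMod N) = 0 := by exact ZMod.natCast_self _
    push_cast at this
    exact this
  have hc2 : c * c = 0 := by
    rw [hc, ← pow_add]
    have : m - 1 + (m - 1) = m + (m - 2) := by omega
    rw [this, pow_add, hpm0, zero_mul]
  -- dft as gauss sum of shifted character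
  have dft_gauss : ∀ a : ZMod N, dft ⇑χ a = gaussSum χ (ψ.mulShift a) := by
    intro a
    rw [dft_eq_gauss]
    simp [gaussSum, AddChar.mulShift_apply]
    rfl
  have dft_one : dft ⇑χ 1 = gaussSum χ ψ := by
    rw [dft_gauss, AddChar.mulShift_one]
  -- nonunit times c is zero
  have key0 : ∀ a : ZMod N, ¬IsUnit a → a * c = 0 := by
    intro a ha
    have hav : ((a.val : ℕ) : ZMod N) = a := ZMod.natCast_zmod_val a
    rw [← hav, ZMod.isUnit_iff_coprime] at ha
    have hpd : p ∣ a.val := by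
      by_contra hpd
      exact ha (Nat.Coprime.pow_right m ((Nat.coprime_comm).mp (hp'.coprime_iff_not_dvd.mpr hpd)))
    obtain ⟨d, hd⟩ := hpd
    have : a = (p : ZMod N) * (d : ZMod N) := by
      rw [← hav, hd]; push_cast; ring
    rw [this, hc]
    have : (p : ZMod N) * (p : ZMod N) ^ (m - 1) = (p : ZMod N) ^ m := by
      rw [← pow_succ']
      congr 1
      omega
    calc (p : ZMod N) * (d : ZMod N) * (p : ZMod N) ^ (m - 1)
        = (d : ZMod N) * ((p : ZMod N) * (p : ZMod N) ^ (m - 1)) := by ring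
      _ = 0 := by rw [this, hpm0, mul_zero]
  have hc0 : c ≠ 0 := by
    rw [hc]
    intro hcz
    have : ((p ^ (m - 1) : ℕ) : ZMod N) = 0 := by push_cast; exact hcz
    rw [ZMod.natCast_eq_zero_iff] at this
    have := Nat.le_of_dvd (Nat.pow_pos hp'.pos) this
    have := (Nat.pow_lt_pow_iff_right hp'.one_lt).mpr (show m - 1 < m by omega)
    omega
  have htu : IsUnit (1 + c) := IsNilpotent.isUnit_one_add ⟨2, by rw [pow_two, hc2]⟩
  have hψ1 : ∀ x : ZMod N, ψ x = 1 → x = 0 := by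
    intro x hx
    apply ZMod.injective_toCircle (N := N)
    have h0 : ZMod.toCircle (0 : ZMod N) = 1 := by
      exact (ZMod.toCircle (N := N)).map_zero_eq_one
    rw [h0]
    have : ((ZMod.toCircle x : Circle) : ℂ) = ((1 : Circle) : ℂ) := by
      rw [← ZMod.stdAddChar_apply]; simpa using hx
    exact Subtype.coe_injective this
  -- If χ (1 + c) = 1 then dft χ 1 = 0, contradiction.
  have hχt : χ (1 + c) ≠ 1 := by
    intro hχ1
    apply h
    have hpow : ∀ k : ℕ, (1 + c) ^ k = 1 + (k : ZMod N) * c := one_add_pow_of_sq_zero hc2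
    -- each dft χ ((1+c)^k) = dft χ 1
    have S1 : ∑ k ∈ range p, dft ⇑χ ((1 + c) ^ k) = (p : ℂ) * dft ⇑χ 1 := by
      have : ∀ k ∈ range p, dft ⇑χ ((1 + c) ^ k) = dft ⇑χ 1 := by
        intro k _
        obtain ⟨u, hu⟩ := htu.pow k
        have h1 : χ ((1 + c) ^ k) = 1 := by rw [map_pow, hχ1, one_pow]
        have := gaussSum_mulShift χ ψ u
        rw [hu] at this
        rw [dft_gauss, dft_one, ← this, h1, one_mul]
      rw [Finset.sum_congr rfl this, Finset.sum_const, card_range, nsmul_eq_mul]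
    have S2 : ∑ k ∈ range p, dft ⇑χ ((1 + c) ^ k) = 0 := by
      have hterm : ∀ k : ℕ, dft ⇑χ ((1 + c) ^ k) =
          ∑ b : ZMod N, χ b * ψ b * ψ (c * b) ^ k := by
        intro k
        rw [dft_eq_gauss]
        refine Finset.sum_congr rfl fun b _ => ?_
        rw [hpow k]
        have : (1 + (k : ZMod N) * c) * b = b + k • (c * b) := by
          rw [nsmul_eq_mul]; push_cast; ring
        rw [this, ψ.map_add_eq_mul, AddChar.map_nsmul_eq_pow]
        ring
      simp_rw [hterm]
      rw [Finset.sum_comm]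
      refine Finset.sum_eq_zero fun b _ => ?_
      by_cases hb : IsUnit b
      · rw [← Finset.mul_sum]
        have hcb : c * b ≠ 0 := by
          intro hcb0
          obtain ⟨v, hv⟩ := hb
          apply hc0
          calc c = c * b * ((v⁻¹ : (ZMod N)ˣ) : ZMod N) := by
                rw [← hv, mul_assoc, ← Units.val_mul, mul_inv_cancel, Units.val_one, mul_one]
            _ = 0 := by rw [hcb0, zero_mul]
        have hx1 : ψ (c * b) ≠ 1 := fun hx => hcb (hψ1 _ hx)
        have hxp : ψ (c * b) ^ p = 1 := by
          rw [← AddChar.map_nsmul_eq_pow]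
          have : p • (c * b) = 0 := by
            rw [nsmul_eq_mul, hc, ← mul_assoc, ← pow_succ']
            have : m - 1 + 1 = m := by omega
            rw [this, hpm0, zero_mul]
          rw [this, ψ.map_zero_eq_one]
        rw [geom_sum_eq hx1, hxp, sub_self, zero_div, mul_zero]
      · rw [χ.map_nonunit hb]
        simp
    rw [S1] at S2
    have hpne : (p : ℂ) ≠ 0 := Nat.cast_ne_zero.mpr hp'.ne_zero
    exact (mul_eq_zero.mp S2).resolve_left hpne
  -- Part 1: nonunit a gives dft = 0
  have part1 : ∀ a : ZMod N, ¬IsUnit a → dft ⇑χ a = 0 := by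
    intro a ha
    obtain ⟨u, hu⟩ := htu
    have key := gaussSum_mulShift χ (ψ.mulShift a) u
    rw [AddChar.mulShift_mulShift, hu] at key
    have hat : a * (1 + c) = a := by
      rw [mul_add, mul_one, key0 a ha, add_zero]
    rw [hat, ← dft_gauss] at key
    -- key : χ (1+c) * dft χ a = dft χ a
    by_contra hd
    exact hχt (mul_right_cancel₀ hd (by rw [key, one_mul]))
  refine ⟨part1, fun a => ?_⟩
  by_cases ha : IsUnit a
  · obtain ⟨u, hu⟩ := ha
    have key := gaussSum_mulShift χ ψ u
    rw [hu, ← dft_gauss, ← dft_one] at key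
    have hinv : χ⁻¹ a * χ a = 1 := by
      rw [MulChar.inv_apply_eq_inv', ← hu]
      have : χ ↑u ≠ 0 := by
        intro h0
        have : χ ↑u * χ ↑u⁻¹ = 1 := by rw [← map_mul, ← Units.val_mul, mul_inv_cancel,
          Units.val_one, map_one]
        rw [h0, zero_mul] at this
        exact zero_ne_one this
      exact inv_mul_cancel₀ this
    calc dft ⇑χ a = (χ⁻¹ a * χ a) * dft ⇑χ a := by rw [hinv, one_mul]
      _ = χ⁻¹ a * (χ a * dft ⇑χ a) := by ring
      _ = dft ⇑χ 1 * χ⁻¹ a := by rw [key]; ring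
  · rw [part1 a ha, MulChar.map_nonunit χ⁻¹ ha, mul_zero]
end

section
/- With N = R₁R₂, gcd(R₁,R₂) = 1, idempotents e₁, e₂, and χ the multiplicative character on Z/N corresponding to the pair (χ₁, χ₂): the N-point DFT satisfies χ̂(a₁e₁ + a₂e₂) = χ̂₁(a₁·e₁/R₂)·χ̂₂(a₂·e₂/R₁) for all a₁ ∈ Z/R₁, a₂ ∈ Z/R₂, where e₁/R₂ is a unit in Z/R₁ and e₂/R₁ is a unit in Z/R₂. -/
open Finset

noncomputable def Eexp (N m : ℕ) : ℂ :=
  Complex.exp (2 * Real.pi * Complex.I * (m : ℂ) / (N : ℂ))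

lemma Eexp_add (N m n : ℕ) : Eexp N (m + n) = Eexp N m * Eexp N n := by
  rw [Eexp, Eexp, Eexp, ← Complex.exp_add]
  congr 1
  push_cast
  ring

lemma Eexp_mod (N : ℕ) [NeZero N] (m : ℕ) : Eexp N m = Eexp N (m % N) := by
  conv_lhs => rw [← Nat.div_add_mod m N]
  rw [Eexp_add]
  have hN : (N : ℂ) ≠ 0 := Nat.cast_ne_zero.mpr (NeZero.ne N)
  have h1 : Eexp N (N * (m / N)) = 1 := by
    rw [Eexp]
    set q := m / N with hq
    have : 2 * (Real.pi : ℂ) * Complex.I * ((N * q : ℕ) : ℂ) / (N : ℂ)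
        = ((q : ℤ) : ℂ) * (2 * Real.pi * Complex.I) := by
      have : ((N * q : ℕ) : ℂ) = (N : ℂ) * (q : ℂ) := by push_cast; ring
      rw [this]
      field_simp
      push_cast; ring
    rw [this, Complex.exp_int_mul_two_pi_mul_I]
  rw [h1, one_mul]

lemma Eexp_congr (N : ℕ) [NeZero N] {m n : ℕ} (hmn : m ≡ n [MOD N]) :
    Eexp N m = Eexp N n := by
  rw [Eexp_mod N m, Eexp_mod N n, hmn]

lemma Eexp_scale (R₁ R₂ : ℕ) [NeZero R₁] [NeZero R₂] (m : ℕ) :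
    Eexp (R₁ * R₂) (m * R₂) = Eexp R₁ m := by
  rw [Eexp, Eexp]
  congr 1
  have h1 : (R₁ : ℂ) ≠ 0 := Nat.cast_ne_zero.mpr (NeZero.ne R₁)
  have h2 : (R₂ : ℂ) ≠ 0 := Nat.cast_ne_zero.mpr (NeZero.ne R₂)
  have hm : ((m * R₂ : ℕ) : ℂ) = (m : ℂ) * (R₂ : ℂ) := by push_cast; ring
  have hr : ((R₁ * R₂ : ℕ) : ℂ) = (R₁ : ℂ) * (R₂ : ℂ) := by push_cast; ring
  rw [hm, hr]
  field_simp

theorem stmt5 (R₁ R₂ : ℕ) [NeZero R₁] [NeZero R₂] (h : Nat.Coprime R₁ R₂)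
    (e₁ e₂ : ℕ)
    (he₁₁ : e₁ % R₁ = 1 % R₁) (he₁₂ : e₁ % R₂ = 0)
    (he₂₁ : e₂ % R₁ = 0) (he₂₂ : e₂ % R₂ = 1 % R₂)
    (χ₁ : MulChar (ZMod R₁) ℂ) (χ₂ : MulChar (ZMod R₂) ℂ)
    (χ : MulChar (ZMod (R₁ * R₂)) ℂ)
    (hχ : ∀ a : ZMod (R₁ * R₂),
      χ a = χ₁ (ZMod.castHom (dvd_mul_right R₁ R₂) (ZMod R₁) a) *
            χ₂ (ZMod.castHom (dvd_mul_left R₂ R₁) (ZMod R₂) a)) :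
    IsUnit ((e₁ / R₂ : ℕ) : ZMod R₁) ∧ IsUnit ((e₂ / R₁ : ℕ) : ZMod R₂) ∧
    ∀ (a₁ : ZMod R₁) (a₂ : ZMod R₂),
      dft ⇑χ ((a₁.val * e₁ + a₂.val * e₂ : ℕ) : ZMod (R₁ * R₂)) =
        dft ⇑χ₁ (a₁ * ((e₁ / R₂ : ℕ) : ZMod R₁)) *
          dft ⇑χ₂ (a₂ * ((e₂ / R₁ : ℕ) : ZMod R₂)) := by
  have hNne : R₁ * R₂ ≠ 0 := Nat.mul_ne_zero (NeZero.ne R₁) (NeZero.ne R₂)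
  haveI : NeZero (R₁ * R₂) := ⟨hNne⟩
  have hd₁ : R₂ ∣ e₁ := Nat.dvd_of_mod_eq_zero he₁₂
  have hd₂ : R₁ ∣ e₂ := Nat.dvd_of_mod_eq_zero he₂₁
  have he₁ : R₂ * (e₁ / R₂) = e₁ := Nat.mul_div_cancel' hd₁
  have he₂ : R₁ * (e₂ / R₁) = e₂ := Nat.mul_div_cancel' hd₂
  have hc₁ : (e₁ : ZMod R₁) = 1 := by
    have h' : e₁ ≡ 1 [MOD R₁] := he₁₁
    have := (ZMod.natCast_eq_natCast_iff _ _ _).mpr h'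
    simpa using this
  have hc₂ : (e₂ : ZMod R₂) = 1 := by
    have h' : e₂ ≡ 1 [MOD R₂] := he₂₂
    have := (ZMod.natCast_eq_natCast_iff _ _ _).mpr h'
    simpa using this
  have hz₁ : (e₂ : ZMod R₁) = 0 := by
    have h' : e₂ ≡ 0 [MOD R₁] := by simpa [Nat.ModEq] using he₂₁
    have := (ZMod.natCast_eq_natCast_iff _ _ _).mpr h'
    simpa using this
  have hz₂ : (e₁ : ZMod R₂) = 0 := by
    have h' : e₁ ≡ 0 [MOD R₂] := by simpa [Nat.ModEq] using he₁₂
    have := (ZMod.natCast_eq_natCast_iff _ _ _).mpr h'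
    simpa using this
  have hinv₁ : ((R₂ : ℕ) : ZMod R₁) * ((e₁ / R₂ : ℕ) : ZMod R₁) = 1 := by
    rw [← Nat.cast_mul, he₁, hc₁]
  have hinv₂ : ((R₁ : ℕ) : ZMod R₂) * ((e₂ / R₁ : ℕ) : ZMod R₂) = 1 := by
    rw [← Nat.cast_mul, he₂, hc₂]
  have hu₁ : IsUnit ((e₁ / R₂ : ℕ) : ZMod R₁) :=
    IsUnit.of_mul_eq_one _ ((mul_comm _ _).trans hinv₁)
  have hu₂ : IsUnit ((e₂ / R₁ : ℕ) : ZMod R₂) :=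
    IsUnit.of_mul_eq_one _ ((mul_comm _ _).trans hinv₂)
  refine ⟨hu₁, hu₂, ?_⟩
  intro a₁ a₂
  set c₁ : ZMod R₁ := ((e₁ / R₂ : ℕ) : ZMod R₁) with hc₁def
  set c₂ : ZMod R₂ := ((e₂ / R₁ : ℕ) : ZMod R₂) with hc₂def
  set A : ZMod (R₁ * R₂) := ((a₁.val * e₁ + a₂.val * e₂ : ℕ) : ZMod (R₁ * R₂)) with hA
  let e := ZMod.chineseRemainder h
  have key : ∀ b : ZMod (R₁ * R₂),
      χ b * Eexp (R₁ * R₂) (A.val * b.val) =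
        (χ₁ (e b).1 * Eexp R₁ ((a₁ * c₁).val * ((e b).1).val)) *
        (χ₂ (e b).2 * Eexp R₂ ((a₂ * c₂).val * ((e b).2).val)) := by
    intro b
    have hb1' : (e b).1 = ZMod.castHom (dvd_mul_right R₁ R₂) (ZMod R₁) b := by
      have hfg : (RingHom.fst (ZMod R₁) (ZMod R₂)).comp (e : ZMod (R₁ * R₂) →+* ZMod R₁ × ZMod R₂)
          = ZMod.castHom (dvd_mul_right R₁ R₂) (ZMod R₁) := RingHom.ext_zmod _ _
      exact DFunLike.congr_fun hfg b
    have hb2' : (e b).2 = ZMod.castHom (dvd_mul_left R₂ R₁) (ZMod R₂) b := by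
      have hfg : (RingHom.snd (ZMod R₁) (ZMod R₂)).comp (e : ZMod (R₁ * R₂) →+* ZMod R₁ × ZMod R₂)
          = ZMod.castHom (dvd_mul_left R₂ R₁) (ZMod R₂) := RingHom.ext_zmod _ _
      exact DFunLike.congr_fun hfg b
    have hb1 : (e b).1 = ((b.val : ℕ) : ZMod R₁) := by
      rw [hb1', ZMod.castHom_apply, ZMod.natCast_val]
    have hb2 : (e b).2 = ((b.val : ℕ) : ZMod R₂) := by
      rw [hb2', ZMod.castHom_apply, ZMod.natCast_val]
    have hχb : χ b = χ₁ (e b).1 * χ₂ (e b).2 := by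
      rw [hχ b, hb1', hb2']
    have hE : Eexp (R₁ * R₂) (A.val * b.val) =
        Eexp R₁ ((a₁ * c₁).val * ((e b).1).val) *
        Eexp R₂ ((a₂ * c₂).val * ((e b).2).val) := by
      rw [← Eexp_scale R₁ R₂ ((a₁ * c₁).val * ((e b).1).val)]
      have hcomm : ∀ n : ℕ, Eexp (R₂ * R₁) n = Eexp (R₁ * R₂) n := fun n => by
        rw [Nat.mul_comm]
      rw [show Eexp R₂ ((a₂ * c₂).val * ((e b).2).val)
            = Eexp (R₁ * R₂) ((a₂ * c₂).val * ((e b).2).val * R₁) from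
          (Eexp_scale R₂ R₁ _).symm.trans (hcomm _)]
      rw [← Eexp_add]
      apply Eexp_congr
      rw [← Nat.modEq_and_modEq_iff_modEq_mul h]
      have hAval : A.val = (a₁.val * e₁ + a₂.val * e₂) % (R₁ * R₂) := by
        rw [hA, ZMod.val_natCast]
      have hAv₁ : ((A.val : ℕ) : ZMod R₁) = a₁ := by
        have step : ((A.val : ℕ) : ZMod R₁)
            = ((a₁.val * e₁ + a₂.val * e₂ : ℕ) : ZMod R₁) := by
          rw [ZMod.natCast_eq_natCast_iff, hAval]
          exact (Nat.mod_modEq _ _).of_dvd (dvd_mul_right R₁ R₂)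
        rw [step]
        push_cast [hc₁, hz₁]
        simp [ZMod.natCast_val, ZMod.cast_id]
      have hAv₂ : ((A.val : ℕ) : ZMod R₂) = a₂ := by
        have step : ((A.val : ℕ) : ZMod R₂)
            = ((a₁.val * e₁ + a₂.val * e₂ : ℕ) : ZMod R₂) := by
          rw [ZMod.natCast_eq_natCast_iff, hAval]
          exact (Nat.mod_modEq _ _).of_dvd (dvd_mul_left R₂ R₁)
        rw [step]
        push_cast [hc₂, hz₂]
        simp [ZMod.natCast_val, ZMod.cast_id]
      constructor
      · rw [← ZMod.natCast_eq_natCast_iff]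
        push_cast
        rw [hAv₁, ← hb1]
        rw [show (((a₁ * c₁).val : ℕ) : ZMod R₁) = a₁ * c₁ by
          rw [ZMod.natCast_val, ZMod.cast_id]]
        rw [show ((((e b).1).val : ℕ) : ZMod R₁) = (e b).1 by
          rw [ZMod.natCast_val, ZMod.cast_id]]
        rw [ZMod.natCast_self, mul_zero, add_zero]
        rw [hc₁def] at hinv₁ ⊢
        linear_combination (-(a₁ * (e b).1)) * hinv₁
      · rw [← ZMod.natCast_eq_natCast_iff]
        push_cast
        rw [hAv₂, ← hb2]
        rw [show (((a₂ * c₂).val : ℕ) : ZMod R₂) = a₂ * c₂ by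
          rw [ZMod.natCast_val, ZMod.cast_id]]
        rw [show ((((e b).2).val : ℕ) : ZMod R₂) = (e b).2 by
          rw [ZMod.natCast_val, ZMod.cast_id]]
        rw [ZMod.natCast_self, mul_zero, zero_add]
        rw [hc₂def] at hinv₂ ⊢
        linear_combination (-(a₂ * (e b).2)) * hinv₂
    rw [hχb, hE]
    ring
  have hdft : dft ⇑χ A = ∑ b : ZMod (R₁ * R₂), χ b * Eexp (R₁ * R₂) (A.val * b.val) := rfl
  have hdft₁ : dft ⇑χ₁ (a₁ * c₁)
      = ∑ b₁ : ZMod R₁, χ₁ b₁ * Eexp R₁ ((a₁ * c₁).val * b₁.val) := rfl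
  have hdft₂ : dft ⇑χ₂ (a₂ * c₂)
      = ∑ b₂ : ZMod R₂, χ₂ b₂ * Eexp R₂ ((a₂ * c₂).val * b₂.val) := rfl
  rw [hdft, hdft₁, hdft₂, Fintype.sum_mul_sum]
  rw [Fintype.sum_equiv e.toEquiv _
    (fun p : ZMod R₁ × ZMod R₂ =>
      (χ₁ p.1 * Eexp R₁ ((a₁ * c₁).val * (p.1).val)) *
      (χ₂ p.2 * Eexp R₂ ((a₂ * c₂).val * (p.2).val))) key]
  exact Fintype.sum_prod_type _
end

section
/- If χ₁ and χ₂ are primitive multiplicative characters on Z/R₁ and Z/R₂, gcd(R₁,R₂) = 1, N = R₁R₂, and χ is the corresponding character on Z/N, then χ is primitive with Gauss sum G(χ) = G(χ₁)·G(χ₂)·χ₁*(e₁/R₂)·χ₂*(e₂/R₁). -/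
open Finset

/-- A multiplicative character `χ` on `ZMod M` is primitive if `χ̂ = G(χ)·χ*` everywhere,
where `G(χ) = χ̂(1)` and `χ*` is the inverse (conjugate) character. -/
def IsPrimitiveChar {M : ℕ} [NeZero M] (χ : MulChar (ZMod M) ℂ) : Prop :=
  ∀ a : ZMod M, dft ⇑χ a = dft ⇑χ 1 * χ⁻¹ a

noncomputable def eZ {M : ℕ} [NeZero M] (x : ZMod M) : ℂ :=
  Complex.exp (2 * Real.pi * Complex.I * (x.val : ℂ) / (M : ℂ))

lemma exp_congr (M : ℕ) [NeZero M] {m n : ℕ} (hmn : m % M = n % M) :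
    Complex.exp (2 * Real.pi * Complex.I * (m : ℂ) / (M : ℂ)) =
      Complex.exp (2 * Real.pi * Complex.I * (n : ℂ) / (M : ℂ)) := by
  have hM : (M : ℂ) ≠ 0 := Nat.cast_ne_zero.mpr (NeZero.ne M)
  have key : ∀ k : ℕ, Complex.exp (2 * Real.pi * Complex.I * (k : ℂ) / (M : ℂ)) =
      Complex.exp (2 * Real.pi * Complex.I * ((k % M : ℕ) : ℂ) / (M : ℂ)) := by
    intro k
    conv_lhs => rw [← Nat.mod_add_div k M]
    rw [show 2 * (Real.pi : ℂ) * Complex.I * ((k % M + M * (k / M) : ℕ) : ℂ) / M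
        = 2 * Real.pi * Complex.I * ((k % M : ℕ) : ℂ) / M + (k / M : ℕ) * (2 * Real.pi * Complex.I)
        by push_cast; field_simp, Complex.exp_add]
    rw [show ((k / M : ℕ) : ℂ) = (((k / M : ℕ) : ℤ) : ℂ) by norm_cast,
      Complex.exp_int_mul_two_pi_mul_I, mul_one]
  rw [key m, key n, hmn]

lemma eZ_natCast {M : ℕ} [NeZero M] (n : ℕ) :
    eZ ((n : ZMod M)) = Complex.exp (2 * Real.pi * Complex.I * (n : ℂ) / (M : ℂ)) := by
  rw [eZ, ZMod.val_natCast]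
  exact exp_congr M (by simp [Nat.mod_mod_of_dvd])

lemma dft_eq {M : ℕ} [NeZero M] (x : ZMod M → ℂ) (a : ZMod M) :
    dft x a = ∑ b : ZMod M, x b * eZ (a * b) := by
  refine Finset.sum_congr rfl fun b _ => ?_
  congr 1
  rw [show a * b = ((a.val * b.val : ℕ) : ZMod M) by
      push_cast [ZMod.natCast_val, ZMod.cast_id]; rfl, eZ_natCast]

lemma eZ_crt (R₁ R₂ : ℕ) [NeZero R₁] [NeZero R₂]
    (h : Nat.Coprime R₁ R₂) (e₁ e₂ : ℕ)
    (he₁₁ : e₁ % R₁ = 1 % R₁) (he₁₂ : e₁ % R₂ = 0)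
    (he₂₁ : e₂ % R₁ = 0) (he₂₂ : e₂ % R₂ = 1 % R₂)
    (x : ZMod (R₁ * R₂)) :
    eZ x = eZ (((e₁ / R₂ : ℕ) : ZMod R₁) * ZMod.castHom (dvd_mul_right R₁ R₂) (ZMod R₁) x) *
           eZ (((e₂ / R₁ : ℕ) : ZMod R₂) * ZMod.castHom (dvd_mul_left R₂ R₁) (ZMod R₂) x) := by
  have := NeZero.ne R₁; have := NeZero.ne R₂
  have hR1 : (R₁ : ℂ) ≠ 0 := Nat.cast_ne_zero.mpr ‹R₁ ≠ 0›
  have hR2 : (R₂ : ℂ) ≠ 0 := Nat.cast_ne_zero.mpr ‹R₂ ≠ 0›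
  set n := x.val with hn
  have hx : x = (n : ZMod (R₁ * R₂)) := by simp [hn, ZMod.natCast_val, ZMod.cast_id]
  have hc₁ : ZMod.castHom (dvd_mul_right R₁ R₂) (ZMod R₁) x = (n : ZMod R₁) := by
    rw [hx]; simp
  have hc₂ : ZMod.castHom (dvd_mul_left R₂ R₁) (ZMod R₂) x = (n : ZMod R₂) := by
    rw [hx]; simp
  rw [hc₁, hc₂, show ((e₁ / R₂ : ℕ) : ZMod R₁) * (n : ZMod R₁) = ((e₁ / R₂ * n : ℕ) : ZMod R₁) by push_cast; ring,
    show ((e₂ / R₁ : ℕ) : ZMod R₂) * (n : ZMod R₂) = ((e₂ / R₁ * n : ℕ) : ZMod R₂) by push_cast; ring,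
    eZ_natCast, eZ_natCast]
  conv_lhs => rw [hx, eZ_natCast]
  rw [← Complex.exp_add]
  have hd₁ : R₂ * (e₁ / R₂) = e₁ := Nat.mul_div_cancel' (Nat.dvd_of_mod_eq_zero he₁₂)
  have hd₂ : R₁ * (e₂ / R₁) = e₂ := Nat.mul_div_cancel' (Nat.dvd_of_mod_eq_zero he₂₁)
  have harg : 2 * (Real.pi:ℂ) * Complex.I * ((e₁ / R₂ * n : ℕ) : ℂ) / R₁ +
      2 * Real.pi * Complex.I * ((e₂ / R₁ * n : ℕ) : ℂ) / R₂ =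
      2 * Real.pi * Complex.I * ((e₁ * n + e₂ * n : ℕ) : ℂ) / ((R₁ * R₂ : ℕ) : ℂ) := by
    have h1 : ((e₁ : ℕ) : ℂ) = (R₂ : ℂ) * ((e₁ / R₂ : ℕ) : ℂ) := by
      rw [← Nat.cast_mul, hd₁]
    have h2 : ((e₂ : ℕ) : ℂ) = (R₁ : ℂ) * ((e₂ / R₁ : ℕ) : ℂ) := by
      rw [← Nat.cast_mul, hd₂]
    push_cast [h1, h2]
    field_simp
  rw [harg]
  refine (exp_congr (R₁ * R₂) ?_).symm
  have hmod : (e₁ + e₂) % (R₁ * R₂) = 1 % (R₁ * R₂) := by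
    have h1 : (e₁ + e₂) % R₁ = 1 % R₁ := by
      rw [Nat.add_mod, he₁₁, he₂₁, Nat.add_zero, Nat.mod_mod_of_dvd 1 dvd_rfl]
    have h2 : (e₁ + e₂) % R₂ = 1 % R₂ := by
      rw [Nat.add_mod, he₁₂, he₂₂, Nat.zero_add, Nat.mod_mod_of_dvd 1 dvd_rfl]
    exact (Nat.modEq_and_modEq_iff_modEq_mul h).mp ⟨h1, h2⟩
  calc (e₁ * n + e₂ * n) % (R₁ * R₂) = ((e₁ + e₂) * n) % (R₁ * R₂) := by rw [add_mul]
    _ = (1 * n) % (R₁ * R₂) := (Nat.ModEq.mul_right n hmod)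
    _ = n % (R₁ * R₂) := by rw [one_mul]

theorem stmt8 (R₁ R₂ : ℕ) [NeZero R₁] [NeZero R₂] (h : Nat.Coprime R₁ R₂)
    (e₁ e₂ : ℕ)
    (he₁₁ : e₁ % R₁ = 1 % R₁) (he₁₂ : e₁ % R₂ = 0)
    (he₂₁ : e₂ % R₁ = 0) (he₂₂ : e₂ % R₂ = 1 % R₂)
    (χ₁ : MulChar (ZMod R₁) ℂ) (χ₂ : MulChar (ZMod R₂) ℂ)
    (hp₁ : IsPrimitiveChar χ₁) (hp₂ : IsPrimitiveChar χ₂)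
    (χ : MulChar (ZMod (R₁ * R₂)) ℂ)
    (hχ : ∀ a : ZMod (R₁ * R₂),
      χ a = χ₁ (ZMod.castHom (dvd_mul_right R₁ R₂) (ZMod R₁) a) *
            χ₂ (ZMod.castHom (dvd_mul_left R₂ R₁) (ZMod R₂) a)) :
    IsPrimitiveChar χ ∧
    dft ⇑χ 1 = dft ⇑χ₁ 1 * dft ⇑χ₂ 1 *
      χ₁⁻¹ ((e₁ / R₂ : ℕ) : ZMod R₁) * χ₂⁻¹ ((e₂ / R₁ : ℕ) : ZMod R₂) := by
  set c₁ := ZMod.castHom (dvd_mul_right R₁ R₂) (ZMod R₁) with hc₁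
  set c₂ := ZMod.castHom (dvd_mul_left R₂ R₁) (ZMod R₂) with hc₂
  set f₁ : ZMod R₁ := ((e₁ / R₂ : ℕ) : ZMod R₁) with hf₁
  set f₂ : ZMod R₂ := ((e₂ / R₁ : ℕ) : ZMod R₂) with hf₂
  -- bijectivity of the CRT map
  have hbij : Function.Bijective (fun b : ZMod (R₁ * R₂) => (c₁ b, c₂ b)) := by
    rw [Fintype.bijective_iff_injective_and_card]
    constructor
    · intro b b' hbb
      have h1 : (b.val : ZMod R₁) = (b'.val : ZMod R₁) := by
        rw [ZMod.natCast_val, ZMod.natCast_val]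
        exact congrArg Prod.fst hbb
      have h2 : (b.val : ZMod R₂) = (b'.val : ZMod R₂) := by
        rw [ZMod.natCast_val, ZMod.natCast_val]
        exact congrArg Prod.snd hbb
      have m1 := (ZMod.natCast_eq_natCast_iff _ _ _).mp h1
      have m2 := (ZMod.natCast_eq_natCast_iff _ _ _).mp h2
      have m := (Nat.modEq_and_modEq_iff_modEq_mul h).mp ⟨m1, m2⟩
      have : (b.val : ZMod (R₁ * R₂)) = (b'.val : ZMod (R₁ * R₂)) :=
        (ZMod.natCast_eq_natCast_iff _ _ _).mpr m
      rwa [ZMod.natCast_val, ZMod.natCast_val, ZMod.cast_id, ZMod.cast_id] at this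
    · simp [ZMod.card]
  -- the key factorization
  have key : ∀ a : ZMod (R₁ * R₂),
      dft ⇑χ a = dft ⇑χ₁ (f₁ * c₁ a) * dft ⇑χ₂ (f₂ * c₂ a) := by
    intro a
    rw [dft_eq, dft_eq, dft_eq]
    have step : ∀ b : ZMod (R₁ * R₂),
        χ b * eZ (a * b) =
        (χ₁ (c₁ b) * eZ (f₁ * c₁ a * c₁ b)) * (χ₂ (c₂ b) * eZ (f₂ * c₂ a * c₂ b)) := by
      intro b
      rw [hχ b, eZ_crt R₁ R₂ h e₁ e₂ he₁₁ he₁₂ he₂₁ he₂₂ (a * b), map_mul c₁, map_mul c₂,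
        mul_assoc f₁ (c₁ a) (c₁ b), mul_assoc f₂ (c₂ a) (c₂ b)]
      ring
    calc ∑ b : ZMod (R₁ * R₂), χ b * eZ (a * b)
        = ∑ b : ZMod (R₁ * R₂),
            (χ₁ (c₁ b) * eZ (f₁ * c₁ a * c₁ b)) * (χ₂ (c₂ b) * eZ (f₂ * c₂ a * c₂ b)) :=
          Finset.sum_congr rfl fun b _ => step b
      _ = ∑ p : ZMod R₁ × ZMod R₂,
            (χ₁ p.1 * eZ (f₁ * c₁ a * p.1)) * (χ₂ p.2 * eZ (f₂ * c₂ a * p.2)) :=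
          Fintype.sum_bijective _ hbij _ _ fun b => rfl
      _ = (∑ b₁ : ZMod R₁, χ₁ b₁ * eZ (f₁ * c₁ a * b₁)) *
            (∑ b₂ : ZMod R₂, χ₂ b₂ * eZ (f₂ * c₂ a * b₂)) := by
          rw [Finset.sum_mul_sum]
          exact Fintype.sum_prod_type _
  -- inverse character factorization
  have hinv : ∀ a : ZMod (R₁ * R₂), χ⁻¹ a = χ₁⁻¹ (c₁ a) * χ₂⁻¹ (c₂ a) := by
    intro a
    rw [MulChar.inv_apply_eq_inv', MulChar.inv_apply_eq_inv', MulChar.inv_apply_eq_inv',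
      hχ a, mul_inv]
  have hG : dft ⇑χ 1 = dft ⇑χ₁ 1 * dft ⇑χ₂ 1 * χ₁⁻¹ f₁ * χ₂⁻¹ f₂ := by
    have hk := key 1
    rw [map_one c₁, map_one c₂, mul_one, mul_one, hp₁ f₁, hp₂ f₂] at hk
    rw [hk]; ring
  refine ⟨fun a => ?_, hG⟩
  rw [key a, hp₁ (f₁ * c₁ a), hp₂ (f₂ * c₂ a), hG, hinv a, map_mul, map_mul]
  ring
end

section
/- Let p and q = p+2 be twin primes and y_{pq} the Golomb sequence of period pq with α = e^{iΦ}, cos Φ = −(pq−1)/(pq+1). Then |ŷ_{pq}(m)| is constant in m, i.e., the Golomb sequence has ideal (flat-magnitude) DFT, equivalently ideal periodic autocorrelation. -/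
open Finset



section CharSum
variable (r : ℕ) [Fact r.Prime] (hr : r ≠ 2)

lemma quadChar_shift_sum (hr : r ≠ 2) (s : ZMod r) (hs : s ≠ 0) :
    ∑ a : ZMod r, (quadraticChar (ZMod r) a) * quadraticChar (ZMod r) (a + s) = -1 := by
  classical
  have h2 : ringChar (ZMod r) ≠ 2 := by
    rw [ZMod.ringChar_zmod_n]; exact hr
  have key : ∀ a : ZMod r, a ≠ 0 →
      (quadraticChar (ZMod r) a) * quadraticChar (ZMod r) (a + s)
        = quadraticChar (ZMod r) (1 + a⁻¹ * s) := by
    intro a ha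
    have : a * (1 + a⁻¹ * s) = a + s := by field_simp
    calc (quadraticChar (ZMod r) a) * quadraticChar (ZMod r) (a + s)
        = quadraticChar (ZMod r) a * quadraticChar (ZMod r) (a * (1 + a⁻¹ * s)) := by rw [this]
      _ = quadraticChar (ZMod r) (a * a) * quadraticChar (ZMod r) (1 + a⁻¹ * s) := by
          rw [map_mul, map_mul]; ring
      _ = quadraticChar (ZMod r) (1 + a⁻¹ * s) := by
          rw [← pow_two, quadraticChar_sq_one' ha, one_mul]
  rw [show ∑ a : ZMod r, (quadraticChar (ZMod r) a) * quadraticChar (ZMod r) (a + s)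
      = ∑ a ∈ (univ : Finset (ZMod r)).erase 0,
          (quadraticChar (ZMod r) a) * quadraticChar (ZMod r) (a + s) from
      (Finset.sum_erase _ (by simp)).symm]
  · rw [Finset.sum_congr rfl (fun a ha => key a (Finset.ne_of_mem_erase ha))]
    have := Finset.sum_nbij' (i := fun a => 1 + a⁻¹ * s) (j := fun t => s * (t - 1)⁻¹)
      (s := (univ : Finset (ZMod r)).erase 0) (t := (univ : Finset (ZMod r)).erase 1)
      (f := fun a => quadraticChar (ZMod r) (1 + a⁻¹ * s))
      (g := fun t => quadraticChar (ZMod r) t)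
      (hi := fun a ha => by
        simp only [mem_erase, mem_univ, and_true] at ha ⊢
        intro h
        have : a⁻¹ * s = 0 := by linear_combination h
        rcases mul_eq_zero.1 this with h' | h'
        · exact ha (inv_eq_zero.1 h' ▸ rfl)
        · exact hs h')
      (hj := fun t ht => by
        simp only [mem_erase, mem_univ, and_true] at ht ⊢
        intro h
        rcases mul_eq_zero.1 h with h' | h'
        · exact hs h'
        · have := inv_eq_zero.1 h'
          exact ht (by linear_combination this))
      (left_neg := fun a ha => by
        simp only [mem_erase, mem_univ, and_true] at ha
        field_simp
        rw [add_sub_cancel_left, div_self hs])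
      (right_neg := fun t ht => by
        simp only [mem_erase, mem_univ, and_true] at ht
        have h1 : t - 1 ≠ 0 := sub_ne_zero.2 ht
        field_simp
        ring)
      (h := fun a _ => rfl)
    rw [this]
    rw [Finset.sum_erase_eq_sub (by simp)]
    rw [quadraticChar_sum_zero h2]
    simp
noncomputable def qc (r : ℕ) [Fact r.Prime] (a : ZMod r) : ℂ :=
  ((quadraticChar (ZMod r) a : ℤ) : ℂ)

noncomputable def dd {r : ℕ} (a : ZMod r) : ℂ := if a = 0 then 1 else 0

section OneDim
variable (r : ℕ) [NeZero r]

lemma sum_dd : ∑ a : ZMod r, dd a = 1 := by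
  simp [dd]

lemma sum_mul_dd (f : ZMod r → ℂ) (t : ZMod r) : ∑ b : ZMod r, f b * dd (b + t) = f (-t) := by
  rw [Finset.sum_eq_single (-t)]
  · simp [dd]
  · intro b _ hb
    have : b + t ≠ 0 := fun h => hb (by linear_combination h)
    simp [dd, this]
  · simp

lemma sum_dd_mul (f : ZMod r → ℂ) (t : ZMod r) : ∑ b : ZMod r, dd b * f (b + t) = f t := by
  rw [Finset.sum_eq_single 0]
  · simp [dd]
  · intro b _ hb
    simp [dd, hb]
  · simp

lemma sum_dd_dd (t : ZMod r) : ∑ b : ZMod r, dd b * dd (b + t) = dd t :=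
  sum_dd_mul r (fun b => dd b) t

lemma sum_shift (f : ZMod r → ℂ) (t : ZMod r) : ∑ b : ZMod r, f (b + t) = ∑ b : ZMod r, f b :=
  Fintype.sum_equiv (Equiv.addRight t) _ _ (fun _ => rfl)

end OneDim

section QCLemmas
variable (r : ℕ) [Fact r.Prime]

lemma qc_zero : qc r 0 = 0 := by simp [qc]

lemma qc_mul (a b : ZMod r) : qc r (a * b) = qc r a * qc r b := by
  simp only [qc, map_mul]; push_cast; ring

lemma qc_sum (hr : r ≠ 2) : ∑ a : ZMod r, qc r a = 0 := by
  have h2 : ringChar (ZMod r) ≠ 2 := by rw [ZMod.ringChar_zmod_n]; exact hr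
  rw [show ∑ a : ZMod r, qc r a = ((∑ a : ZMod r, quadraticChar (ZMod r) a : ℤ) : ℂ) from by
    rw [Int.cast_sum]; rfl, quadraticChar_sum_zero h2, Int.cast_zero]

lemma qc_shift (hr : r ≠ 2) (s : ZMod r) :
    ∑ a : ZMod r, qc r a * qc r (a + s) = if s = 0 then ((r : ℂ) - 1) else -1 := by
  split_ifs with hs
  · subst hs
    have h1 : ∀ a : ZMod r, qc r a * qc r (a + 0) = 1 - dd a := by
      intro a
      by_cases ha : a = 0
      · simp [ha, qc_zero, dd]
      · rcases quadraticChar_dichotomy ha with h | h <;>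
          simp [qc, dd, ha, add_zero, h]
    rw [Finset.sum_congr rfl (fun a _ => h1 a), Finset.sum_sub_distrib, sum_dd]
    simp [Finset.card_univ, ZMod.card]
  · have key := quadChar_shift_sum r hr s hs
    have : ∑ a : ZMod r, qc r a * qc r (a + s)
        = ((∑ a : ZMod r, quadraticChar (ZMod r) a * quadraticChar (ZMod r) (a + s) : ℤ) : ℂ) := by
      rw [Int.cast_sum]
      exact Finset.sum_congr rfl (fun a _ => by simp [qc])
    rw [this, key]
    norm_num
end QCLemmas
section TwoDim
variable (p q : ℕ) [Fact p.Prime] [Fact q.Prime]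

lemma innerSumB (hq2 : q ≠ 2) (u v w u' v' w' : ℂ) (t : ZMod q) :
    ∑ b : ZMod q, (u * qc q b + v * dd b + w) * (u' * qc q (b + t) + v' * dd (b + t) + w')
    = u * u' * (if t = 0 then ((q : ℂ) - 1) else -1) + u * v' * qc q (-t) + v * u' * qc q t
      + v * v' * dd t + v * w' + w * v' + (q : ℂ) * (w * w') := by
  have expand : ∀ b : ZMod q,
      (u * qc q b + v * dd b + w) * (u' * qc q (b + t) + v' * dd (b + t) + w')
      = u * u' * (qc q b * qc q (b + t)) + u * v' * (qc q b * dd (b + t)) + u * w' * qc q b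
        + v * u' * (dd b * qc q (b + t)) + v * v' * (dd b * dd (b + t)) + v * w' * dd b
        + w * u' * qc q (b + t) + w * v' * dd (b + t) + w * w' := fun b => by ring
  rw [Finset.sum_congr rfl (fun b _ => expand b)]
  simp only [Finset.sum_add_distrib, ← Finset.mul_sum]
  rw [qc_shift q hq2 t, sum_mul_dd q (qc q) t, qc_sum q hq2,
      sum_dd_mul q (qc q) t, sum_dd_dd, sum_dd,
      sum_shift q (qc q) t, qc_sum q hq2,
      sum_shift q (fun b => dd b) t, sum_dd,
      Finset.sum_const, Finset.card_univ, ZMod.card, nsmul_eq_mul]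
  ring

lemma qc_neg_one_mul (hp2 : p ≠ 2) (hq : q = p + 2) : qc p (-1) * qc q (-1) = -1 := by
  have hpp : p.Prime := Fact.out
  have hple : 2 ≤ p := hpp.two_le
  have hodd : p % 2 = 1 := Nat.odd_iff.mp (hpp.odd_of_ne_two hp2)
  have hcp : ringChar (ZMod p) ≠ 2 := by rw [ZMod.ringChar_zmod_n]; exact hp2
  have hcq : ringChar (ZMod q) ≠ 2 := by rw [ZMod.ringChar_zmod_n]; omega
  have h1 : qc p (-1) = ((ZMod.χ₄ (p : ZMod 4) : ℤ) : ℂ) := by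
    rw [qc, quadraticChar_neg_one hcp, ZMod.card]
  have h2 : qc q (-1) = ((ZMod.χ₄ (q : ZMod 4) : ℤ) : ℂ) := by
    rw [qc, quadraticChar_neg_one hcq, ZMod.card]
  rw [h1, h2, ZMod.χ₄_nat_eq_if_mod_four, ZMod.χ₄_nat_eq_if_mod_four]
  have h4 : p % 4 = 1 ∧ q % 4 = 3 ∨ p % 4 = 3 ∧ q % 4 = 1 := by omega
  have hq2' : q % 2 = 1 := by omega
  rcases h4 with ⟨ha, hb⟩ | ⟨ha, hb⟩ <;> simp [hodd, hq2', ha, hb]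

end TwoDim
noncomputable def EE (p q : ℕ) [Fact p.Prime] [Fact q.Prime] (z : ZMod p × ZMod q) : ℂ :=
  (-qc p z.1) * qc q z.2 + (-(dd z.1 + 1)) * dd z.2 + dd z.1

section TwoDim2
variable (p q : ℕ) [Fact p.Prime] [Fact q.Prime]

lemma sum_EE (hp2 : p ≠ 2) (hq : q = p + 2) : ∑ z : ZMod p × ZMod q, EE p q z = 1 := by
  have hq2 : q ≠ 2 := by have := (Fact.out : p.Prime).two_le; omega
  rw [Fintype.sum_prod_type]
  have inner : ∀ a : ZMod p, ∑ b : ZMod q, EE p q (a, b) = -(dd a + 1) + (q : ℂ) * dd a := by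
    intro a
    unfold EE
    simp only [Finset.sum_add_distrib, ← Finset.mul_sum, Finset.sum_const,
      Finset.card_univ, ZMod.card, nsmul_eq_mul]
    rw [qc_sum q hq2, sum_dd]
    ring
  rw [Finset.sum_congr rfl (fun a _ => inner a)]
  simp only [Finset.sum_add_distrib, Finset.sum_neg_distrib, ← Finset.mul_sum, sum_dd,
    Finset.sum_const, Finset.card_univ, ZMod.card, nsmul_eq_mul]
  have : (q : ℂ) = (p : ℂ) + 2 := by rw [hq]; push_cast; ring
  rw [this]
  ring

lemma sum_EE_shift (hp2 : p ≠ 2) (hq : q = p + 2) (w : ZMod p × ZMod q) :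
    ∑ z : ZMod p × ZMod q, EE p q z * EE p q (z + w)
      = if w = 0 then ((p : ℂ) * q) else -1 := by
  have hq2 : q ≠ 2 := by have := (Fact.out : p.Prime).two_le; omega
  obtain ⟨s, t⟩ := w
  set SQ : ℂ := if t = 0 then ((q : ℂ) - 1) else -1 with hSQ
  set SP : ℂ := if s = 0 then ((p : ℂ) - 1) else -1 with hSP
  rw [Fintype.sum_prod_type]
  have inner : ∀ a : ZMod p, ∑ b : ZMod q, EE p q (a, b) * EE p q ((a, b) + (s, t))
      = (qc p a * qc p (a+s)) * SQ
        + (qc p a * dd (a+s)) * qc q (-t)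
        + qc p a * qc q (-t)
        + (dd a * qc p (a+s)) * qc q t
        + qc p (a+s) * qc q t
        + (dd a * dd (a+s)) * (dd t - 2 + (q : ℂ))
        + dd a * (dd t - 1)
        + dd (a+s) * (dd t - 1)
        + dd t := by
    intro a
    have h := innerSumB q hq2 (-qc p a) (-(dd a + 1)) (dd a)
      (-qc p (a+s)) (-(dd (a+s) + 1)) (dd (a+s)) t
    rw [← hSQ] at h
    exact h.trans (by ring)
  rw [Finset.sum_congr rfl (fun a _ => inner a)]
  simp only [Finset.sum_add_distrib, ← Finset.sum_mul]
  rw [show ∑ a : ZMod p, qc p a * qc p (a+s) = SP from by rw [qc_shift p hp2 s],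
      sum_mul_dd p (qc p) s, qc_sum p hp2, sum_dd_mul p (qc p) s,
      sum_shift p (qc p) s, qc_sum p hp2, sum_dd_dd, sum_dd,
      sum_shift p (fun a => dd a) s, sum_dd,
      Finset.sum_const, Finset.card_univ, ZMod.card, nsmul_eq_mul]
  have hcancel : qc p (-s) * qc q (-t) = -(qc p s * qc q t) := by
    rw [show (-s : ZMod p) = -1 * s from by ring, show (-t : ZMod q) = -1 * t from by ring,
      qc_mul, qc_mul]
    have h := qc_neg_one_mul p q hp2 hq
    linear_combination (qc p s * qc q t) * h
  rw [hcancel]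
  have hq' : (q : ℂ) = (p : ℂ) + 2 := by rw [hq]; push_cast; ring
  have hq0 : ((0 : ℕ) : ℂ) = 0 := by norm_num
  by_cases hs : s = 0 <;> by_cases ht : t = 0 <;>
    simp only [hs, ht, hSP, hSQ, Prod.mk_eq_zero, true_and, and_true, if_true, if_false,
      eq_self_iff_true, dd, one_ne_zero, not_true, not_false_iff, ite_true, ite_false,
      Prod.mk.injEq, false_and, and_false] <;>
    (rw [hq']; ring)

end TwoDim2
section CRTtest
variable (p q : ℕ) [Fact p.Prime] [Fact q.Prime]

example (h : Nat.Coprime p q) (n : ZMod (p * q)) :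
    (ZMod.chineseRemainder h n).1 = ((n.val : ℕ) : ZMod p) := by
  have : (ZMod.chineseRemainder h n)
      = ZMod.castHom (show Nat.lcm p q ∣ p * q by simp [Nat.lcm_dvd_iff]) (ZMod p × ZMod q) n := rfl
  rw [this, ZMod.castHom_apply, ← ZMod.natCast_val, Prod.fst_natCast]

end CRTtest

theorem stmt13 (p q : ℕ) [Fact p.Prime] [Fact q.Prime] (hp2 : p ≠ 2) (hq : q = p + 2)
    (x : ZMod (p * q) → ℂ)
    (hx : ∀ n : ZMod (p * q), x n =
      if n = 0 then 0
      else if p ∣ n.val ∧ ¬ q ∣ n.val then 1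
      else if q ∣ n.val then 0
      else (1 - ((legendreSym p (n.val : ℤ) * legendreSym q (n.val : ℤ) : ℤ) : ℂ)) / 2)
    (α : ℂ)
    (hα : α = Complex.exp (Complex.I *
      (Real.arccos (-(((p : ℝ) * q - 1) / ((p : ℝ) * q + 1))) : ℝ)))
    (y : ZMod (p * q) → ℂ) (hy : ∀ n, y n = if x n = 1 then 1 else α)
    (m₁ m₂ : ZMod (p * q)) :
    ‖dft y m₁‖ = ‖dft y m₂‖ := by
  have hpp : p.Prime := Fact.out
  have hqq : q.Prime := Fact.out
  have hp3 : 3 ≤ p := by have := hpp.two_le; omega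
  have hq2 : q ≠ 2 := by omega
  have hco : Nat.Coprime p q := (Nat.coprime_primes hpp hqq).mpr (by omega)
  haveI : NeZero (p * q) := ⟨Nat.mul_ne_zero hpp.pos.ne' hqq.pos.ne'⟩
  set φ := ZMod.chineseRemainder hco with hφdef
  -- components of φ
  have hφ1 : ∀ n : ZMod (p * q), (φ n).1 = ((n.val : ℕ) : ZMod p) := by
    intro n
    have h : (φ n) = ZMod.castHom
        (show Nat.lcm p q ∣ p * q by simp [Nat.lcm_dvd_iff]) (ZMod p × ZMod q) n := rfl
    rw [h, ZMod.castHom_apply, ← ZMod.natCast_val, Prod.fst_natCast]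
  have hφ2 : ∀ n : ZMod (p * q), (φ n).2 = ((n.val : ℕ) : ZMod q) := by
    intro n
    have h : (φ n) = ZMod.castHom
        (show Nat.lcm p q ∣ p * q by simp [Nat.lcm_dvd_iff]) (ZMod p × ZMod q) n := rfl
    rw [h, ZMod.castHom_apply, ← ZMod.natCast_val, Prod.snd_natCast]
  -- the ±1 sequence
  set ε : ZMod (p * q) → ℂ := fun n => if x n = 1 then 1 else -1 with hεdef
  have hεE : ∀ n, ε n = EE p q (φ n) := by
    intro n
    by_cases h0 : n = 0
    · subst h0
      have hx0 : x 0 = 0 := by rw [hx]; simp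
      have hφ0 : φ (0 : ZMod (p * q)) = 0 := map_zero _
      simp only [hεdef, hx0, hφ0]
      norm_num [EE, dd, qc_zero]
    · have hv0 : n.val ≠ 0 := fun h => h0 ((ZMod.val_eq_zero n).mp h)
      by_cases hdp : p ∣ n.val <;> by_cases hdq : q ∣ n.val
      · exfalso
        have : p * q ∣ n.val := Nat.Coprime.mul_dvd_of_dvd_of_dvd hco hdp hdq
        have hlt : n.val < p * q := ZMod.val_lt n
        have := Nat.le_of_dvd (Nat.pos_of_ne_zero hv0) this
        omega
      · -- p ∣, q ∤ : x = 1
        have hx1 : x n = 1 := by rw [hx]; simp [h0, hdp, hdq]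
        have ha : (φ n).1 = 0 := by
          rw [hφ1, ZMod.natCast_eq_zero_iff]; exact hdp
        have hb : (φ n).2 ≠ 0 := by
          rw [hφ2, Ne, ZMod.natCast_eq_zero_iff]; exact hdq
        simp only [hεdef, hx1, if_pos rfl]
        rw [EE, ha]
        simp [dd, hb, qc_zero]
      · -- q ∣, p ∤ : x = 0
        have hx1 : x n = 0 := by
          rw [hx]; simp [h0, hdp, hdq]
        have ha : (φ n).1 ≠ 0 := by
          rw [hφ1, Ne, ZMod.natCast_eq_zero_iff]; exact hdp
        have hb : (φ n).2 = 0 := by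
          rw [hφ2, ZMod.natCast_eq_zero_iff]; exact hdq
        simp only [hεdef, hx1]
        rw [EE, hb]
        norm_num [dd, ha, qc_zero]
      · -- coprime case
        have ha : (φ n).1 ≠ 0 := by
          rw [hφ1, Ne, ZMod.natCast_eq_zero_iff]; exact hdp
        have hb : (φ n).2 ≠ 0 := by
          rw [hφ2, Ne, ZMod.natCast_eq_zero_iff]; exact hdq
        have hLp : legendreSym p (n.val : ℤ) = quadraticChar (ZMod p) ((φ n).1) := by
          rw [legendreSym, hφ1]; norm_cast
        have hLq : legendreSym q (n.val : ℤ) = quadraticChar (ZMod q) ((φ n).2) := by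
          rw [legendreSym, hφ2]; norm_cast
        have hxn : x n = (1 - ((quadraticChar (ZMod p) ((φ n).1)
            * quadraticChar (ZMod q) ((φ n).2) : ℤ) : ℂ)) / 2 := by
          rw [hx]; simp only [h0, hdp, hdq, if_false, and_true, false_and, not_false_iff,
            and_false]
          rw [hLp, hLq]
        have hEEn : EE p q (φ n) = -(((quadraticChar (ZMod p) ((φ n).1) : ℤ) : ℂ)
            * ((quadraticChar (ZMod q) ((φ n).2) : ℤ) : ℂ)) := by
          rw [EE]
          simp [dd, ha, hb, qc]
        rcases quadraticChar_dichotomy ha with h1 | h1 <;>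
          rcases quadraticChar_dichotomy hb with h2 | h2 <;>
          simp only [hεdef, hxn, hEEn, h1, h2] <;> norm_num
    -- transfer sums via CRT
  have hsum1 : ∑ n : ZMod (p * q), ε n = 1 := by
    rw [Fintype.sum_equiv φ.toEquiv ε (EE p q) (fun n => hεE n)]
    exact sum_EE p q hp2 hq
  have hauto : ∀ τ : ZMod (p * q), ∑ n : ZMod (p * q), ε (n + τ) * ε n
      = if τ = 0 then ((p : ℂ) * q) else -1 := by
    intro τ
    have hpt : ∀ n, ε (n + τ) * ε n = EE p q (φ n) * EE p q (φ n + φ τ) := by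
      intro n
      rw [hεE, hεE, map_add]
      ring
    have htr := Fintype.sum_equiv φ.toEquiv (fun n => EE p q (φ n) * EE p q (φ n + φ τ))
      (fun z => EE p q z * EE p q (z + φ τ)) (fun n => rfl)
    rw [Finset.sum_congr rfl (fun n _ => hpt n), htr, sum_EE_shift p q hp2 hq (φ τ)]
    have hiff : φ τ = 0 ↔ τ = 0 :=
      ⟨fun h => φ.injective (h.trans (map_zero φ).symm), fun h => by rw [h, map_zero]⟩
    by_cases hτ : τ = 0
    · rw [if_pos (hiff.mpr hτ), if_pos hτ]
    · rw [if_neg (fun h => hτ (hiff.mp h)), if_neg hτ]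
  -- facts about α
  set c : ℝ := -(((p : ℝ) * q - 1) / ((p : ℝ) * q + 1)) with hcdef
  have hpq1 : (0 : ℝ) < (p : ℝ) * q + 1 := by positivity
  have hpqge : (1 : ℝ) ≤ (p : ℝ) * q := by
    have h1 : (1 : ℕ) ≤ p * q := Nat.one_le_iff_ne_zero.mpr (NeZero.ne _)
    exact_mod_cast h1
  have hc1 : -1 ≤ c := by
    have h : ((p : ℝ) * q - 1) / ((p : ℝ) * q + 1) ≤ 1 := by
      rw [div_le_one hpq1]; linarith
    rw [hcdef]; linarith
  have hc2 : c ≤ 1 := by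
    have h : (0 : ℝ) ≤ ((p : ℝ) * q - 1) / ((p : ℝ) * q + 1) :=
      div_nonneg (by linarith) (by linarith)
    rw [hcdef]; linarith
  have hαmul : α * (starRingEnd ℂ) α = 1 := by
    rw [hα, ← Complex.exp_conj, map_mul, Complex.conj_I, Complex.conj_ofReal, ← Complex.exp_add]
    rw [show Complex.I * (Real.arccos c : ℂ) + -Complex.I * (Real.arccos c : ℂ) = 0 from by ring]
    exact Complex.exp_zero
  have hαadd : α + (starRingEnd ℂ) α = 2 * (c : ℂ) := by
    rw [Complex.add_conj, hα, mul_comm Complex.I, Complex.exp_ofReal_mul_I_re,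
      Real.cos_arccos hc1 hc2]
    push_cast
    ring
  have hcc : (c : ℂ) * ((p : ℂ) * q + 1) = 1 - (p : ℂ) * q := by
    have hne : (((p : ℝ) * q + 1 : ℝ) : ℂ) ≠ 0 := by
      rw [Complex.ofReal_ne_zero]; exact ne_of_gt hpq1
    rw [hcdef]
    push_cast at hne ⊢
    field_simp
    ring
  -- the y-autocorrelation
  have hyn : ∀ n, y n = (1 + α) / 2 + (1 - α) / 2 * ε n := by
    intro n
    rw [hy, hεdef]
    dsimp only
    split_ifs <;> ring
  have hεconj : ∀ n, (starRingEnd ℂ) (ε n) = ε n := by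
    intro n
    rw [hεdef]
    dsimp only
    split_ifs <;> simp
  have hR : ∀ τ, ∑ n : ZMod (p * q), y (n + τ) * (starRingEnd ℂ) (y n)
      = if τ = 0 then ((p : ℂ) * q) else 0 := by
    intro τ
    have hpt : ∀ n, y (n + τ) * (starRingEnd ℂ) (y n)
        = ((1 + α) / 2 * ((1 + (starRingEnd ℂ) α) / 2))
          + ((1 + α) / 2 * ((1 - (starRingEnd ℂ) α) / 2)) * ε n
          + (((1 + (starRingEnd ℂ) α) / 2) * ((1 - α) / 2)) * ε (n + τ)
          + ((1 - α) / 2 * ((1 - (starRingEnd ℂ) α) / 2)) * (ε (n + τ) * ε n) := by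
      intro n
      rw [hyn, hyn]
      simp only [map_add, map_sub, map_one, map_mul, map_div₀, map_ofNat, hεconj]
      ring
    rw [Finset.sum_congr rfl (fun n _ => hpt n)]
    simp only [Finset.sum_add_distrib, ← Finset.mul_sum, Finset.sum_const, Finset.card_univ,
      ZMod.card, nsmul_eq_mul]
    rw [hsum1, sum_shift (p * q) ε τ, hsum1, hauto τ]
    have hN : ((p * q : ℕ) : ℂ) = (p : ℂ) * q := by push_cast; ring
    rw [hN]
    by_cases hτ : τ = 0
    · rw [if_pos hτ, if_pos hτ]
      linear_combination (((p : ℂ) * q - 1) / 2) * hαmul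
    · rw [if_neg hτ, if_neg hτ]
      linear_combination (((p : ℂ) * q - 3) / 4) * hαmul + (((p : ℂ) * q + 1) / 4) * hαadd
        + (1 / 2) * hcc
  -- the additive character
  set e : ZMod (p * q) → ℂ :=
    fun n => Complex.exp (2 * Real.pi * Complex.I * (n.val : ℂ) / ((p * q : ℕ) : ℂ)) with hedef
  have hNne : ((p * q : ℕ) : ℂ) ≠ 0 := by
    exact_mod_cast Nat.cast_ne_zero.mpr (NeZero.ne (p * q))
  have hmod : ∀ k : ℕ, Complex.exp (2 * Real.pi * Complex.I * ((k % (p * q) : ℕ) : ℂ)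
      / ((p * q : ℕ) : ℂ))
      = Complex.exp (2 * Real.pi * Complex.I * ((k : ℕ) : ℂ) / ((p * q : ℕ) : ℂ)) := by
    intro k
    conv_rhs => rw [← Nat.mod_add_div k (p * q)]
    rw [show ((((k % (p * q)) + (p * q) * (k / (p * q)) : ℕ)) : ℂ)
        = ((k % (p * q) : ℕ) : ℂ) + ((p * q : ℕ) : ℂ) * ((k / (p * q) : ℕ) : ℂ) from by
      push_cast; ring]
    have hgen : ∀ (A B NN : ℂ), NN ≠ 0 → 2 * (Real.pi : ℂ) * Complex.I * (A + NN * B) / NN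
        = 2 * (Real.pi : ℂ) * Complex.I * A / NN + B * (2 * (Real.pi : ℂ) * Complex.I) := by
      intro A B NN h
      field_simp
    rw [hgen _ _ _ hNne]
    rw [Complex.exp_add, Complex.exp_nat_mul_two_pi_mul_I, mul_one]
  have heval : ∀ m b : ZMod (p * q),
      Complex.exp (2 * Real.pi * Complex.I * ((m.val * b.val : ℕ) : ℂ) / ((p * q : ℕ) : ℂ))
        = e (m * b) := by
    intro m b
    rw [hedef]
    dsimp only
    rw [ZMod.val_mul]
    exact (hmod (m.val * b.val)).symm
  have he_add : ∀ u v : ZMod (p * q), e (u + v) = e u * e v := by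
    intro u v
    rw [hedef]
    dsimp only
    rw [ZMod.val_add, hmod]
    rw [← Complex.exp_add]
    congr 1
    rw [Nat.cast_add, mul_add, add_div]
  have he0 : e 0 = 1 := by
    rw [hedef]; dsimp only; rw [ZMod.val_zero]; simp
  have he_conj : ∀ u, (starRingEnd ℂ) (e u) = e (-u) := by
    intro u
    have h1 : e u * e (-u) = 1 := by
      rw [← he_add]; simp [he0]
    have h2 : (starRingEnd ℂ) (e u) = (e u)⁻¹ := by
      rw [hedef]
      dsimp only
      rw [← Complex.exp_conj, ← Complex.exp_neg]
      congr 1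
      simp only [map_div₀, map_mul, Complex.conj_I, Complex.conj_ofReal, map_natCast,
        map_ofNat]
      ring
    exact h2.trans (inv_eq_of_mul_eq_one_right h1)
  have hdft : ∀ m, dft y m = ∑ b : ZMod (p * q), y b * e (m * b) := by
    intro m
    rw [dft]
    exact Finset.sum_congr rfl (fun b _ => by rw [heval])
  -- the main computation
  have key : ∀ m : ZMod (p * q), dft y m * (starRingEnd ℂ) (dft y m) = (p : ℂ) * q := by
    intro m
    rw [hdft, map_sum, Finset.sum_mul_sum, Finset.sum_comm]
    have hinner : ∀ c : ZMod (p * q),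
        ∑ b : ZMod (p * q), y b * e (m * b) * (starRingEnd ℂ) (y c * e (m * c))
        = ∑ τ : ZMod (p * q), (y (c + τ) * (starRingEnd ℂ) (y c)) * e (m * τ) := by
      intro c
      rw [Fintype.sum_equiv (Equiv.addLeft c)
        (fun τ => (y (c + τ) * (starRingEnd ℂ) (y c)) * e (m * τ))
        (fun b => y b * e (m * b) * (starRingEnd ℂ) (y c * e (m * c))) ?_]
      intro τ
      show y (c + τ) * (starRingEnd ℂ) (y c) * e (m * τ)
          = y (c + τ) * e (m * (c + τ)) * (starRingEnd ℂ) (y c * e (m * c))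
      rw [map_mul, he_conj, show m * (c + τ) = m * c + m * τ from by ring, he_add]
      have : e (m * c) * e (-(m * c)) = 1 := by rw [← he_add]; simp [he0]
      linear_combination -(y (c + τ) * (starRingEnd ℂ) (y c) * e (m * τ)) * this
    rw [Finset.sum_congr rfl (fun cc _ => hinner cc), Finset.sum_comm]
    have hfin : ∀ τ : ZMod (p * q),
        ∑ cc : ZMod (p * q), (y (cc + τ) * (starRingEnd ℂ) (y cc)) * e (m * τ)
        = (if τ = 0 then ((p : ℂ) * q) else 0) * e (m * τ) := by
      intro τ
      rw [← Finset.sum_mul, hR τ]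
    rw [Finset.sum_congr rfl (fun τ _ => hfin τ), Finset.sum_eq_single 0]
    · simp [he0]
    · intro τ _ hτ
      rw [if_neg hτ, zero_mul]
    · intro h
      exact absurd (Finset.mem_univ 0) h
  have habs : ∀ m : ZMod (p * q), ‖dft y m‖ = Real.sqrt ((p : ℝ) * q) := by
    intro m
    rw [Complex.norm_def]
    congr 1
    have h1 := key m
    rw [Complex.mul_conj] at h1
    have h2 : ((Complex.normSq (dft y m) : ℝ) : ℂ) = (((p : ℝ) * q : ℝ) : ℂ) := by
      rw [h1]; push_cast; ring
    exact_mod_cast h2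
  rw [habs m₁, habs m₂]
end CharSum
end

section
/- Let p ≡ 3 mod 4 be prime, x_p(n) = 0 for n = 0 and ρ((n/p)) otherwise (ρ(−1)=1, ρ(1)=0), and y_p = (1−α)x_p + α·1 with α = e^{iΦ}, cos Φ = −(p−1)/(p+1). Then the p-point DFT ŷ_p has constant magnitude, i.e., y_p is an ideal (perfect autocorrelation) unimodular sequence. -/
open Finset

section Aux

variable (p : ℕ) [Fact p.Prime]

/-- rewrite dft via the standard additive character -/
lemma dft_eq_addChar (f : ZMod p → ℂ) (a : ZMod p) [NeZero p] :
    dft f a = ∑ b : ZMod p, f b * ZMod.stdAddChar (a * b) := by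
  unfold dft
  refine Finset.sum_congr rfl fun b _ => ?_
  congr 1
  have h : (a * b : ZMod p) = (((a.val * b.val : ℕ) : ℤ) : ZMod p) := by
    push_cast [ZMod.natCast_val, ZMod.cast_id]
    ring
  rw [h, ZMod.stdAddChar_coe]
  push_cast
  ring_nf

end Aux

theorem stmt14 (p : ℕ) [Fact p.Prime] (hp : p % 4 = 3)
    (x : ZMod p → ℂ)
    (hx : ∀ n : ZMod p, x n =
      if n = 0 then 0 else (1 - ((legendreSym p (n.val : ℤ) : ℤ) : ℂ)) / 2)
    (α : ℂ)
    (hα : α = Complex.exp (Complex.I *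
      (Real.arccos (-(((p : ℝ) - 1) / ((p : ℝ) + 1))) : ℝ)))
    (y : ZMod p → ℂ) (hy : ∀ n, y n = (1 - α) * x n + α)
    (m₁ m₂ : ZMod p) :
    ‖dft y m₁‖ = ‖dft y m₂‖ := by
  have hprime : p.Prime := Fact.out
  have hp3 : 3 ≤ p := by
    rcases Nat.lt_or_ge p 3 with h | h
    · interval_cases p <;> omega
    · exact h
  haveI : NeZero p := ⟨by omega⟩
  have hp2 : p ≠ 2 := by omega
  have hrc : ringChar (ZMod p) ≠ 2 := by
    rw [ZMod.ringChar_zmod_n]; exact hp2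
  set χ : MulChar (ZMod p) ℂ := (quadraticChar (ZMod p)).ringHomComp (Int.castRingHom ℂ) with hχdef
  set Ψ : AddChar (ZMod p) ℂ := ZMod.stdAddChar with hΨdef
  set g : ℂ := gaussSum χ Ψ with hgdef
  have hχ1 : χ ≠ 1 :=
    (MulChar.ringHomComp_ne_one_iff Int.cast_injective).mpr (quadraticChar_ne_one hrc)
  have hquad : χ.IsQuadratic := (quadraticChar_isQuadratic (ZMod p)).comp _
  have hprim : Ψ.IsPrimitive := ZMod.isPrimitive_stdAddChar p
  -- χ values
  have hχval : ∀ b : ZMod p, χ b = ((quadraticChar (ZMod p) b : ℤ) : ℂ) := fun b => rfl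
  have hχsq : ∀ m : ZMod p, m ≠ 0 → χ m * χ m = 1 := by
    intro m hm
    rw [hχval, ← Int.cast_mul, ← pow_two, quadraticChar_sq_one hm]
    norm_num
  -- x in terms of χ
  have hxχ : ∀ b : ZMod p, x b = (1 - χ b) / 2 - (if b = 0 then (1/2 : ℂ) else 0) := by
    intro b
    rcases eq_or_ne b 0 with rfl | hb
    · simp [hx 0, hχval, quadraticChar_zero]
    · have hcast : (((b.val : ℕ) : ℤ) : ZMod p) = b := by
        push_cast [ZMod.natCast_val, ZMod.cast_id]
        rfl
      have hleg : legendreSym p (b.val : ℤ) = quadraticChar (ZMod p) b := by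
        simp only [legendreSym, hcast]
      rw [hx b, if_neg hb, if_neg hb, sub_zero, hleg, hχval]
  -- sums of the additive character
  have hΨ0 : Ψ 0 = 1 := AddChar.map_zero_eq_one Ψ
  have hΨsum : ∀ m : ZMod p, m ≠ 0 → ∑ b : ZMod p, Ψ (m * b) = 0 := by
    intro m hm
    have : ∑ b : ZMod p, (Ψ.mulShift m) b = 0 :=
      AddChar.sum_eq_zero_of_ne_one (hprim hm)
    simpa [AddChar.mulShift_apply] using this
  have hχsum : ∑ b : ZMod p, χ b = 0 := MulChar.sum_eq_zero_of_ne_one hχ1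
  have hshift : ∀ m : ZMod p, m ≠ 0 → ∑ b : ZMod p, χ b * Ψ (m * b) = χ m * g := by
    intro m hm
    have hu := gaussSum_mulShift χ Ψ (Units.mk0 m hm)
    simp only [Units.val_mk0] at hu
    have hS : gaussSum χ (Ψ.mulShift m) = ∑ b : ZMod p, χ b * Ψ (m * b) := by
      simp [gaussSum, AddChar.mulShift_apply]
    rw [hS] at hu
    calc ∑ b : ZMod p, χ b * Ψ (m * b)
        = (χ m * χ m) * ∑ b : ZMod p, χ b * Ψ (m * b) := by rw [hχsq m hm, one_mul]
      _ = χ m * (χ m * ∑ b : ZMod p, χ b * Ψ (m * b)) := by ring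
      _ = χ m * g := by rw [hu]
  -- dft of y
  have hdfty : ∀ m : ZMod p, dft y m
      = (1 - α) * ((1/2) * (∑ b : ZMod p, Ψ (m * b)) - (1/2) * (∑ b : ZMod p, χ b * Ψ (m * b))
          - 1/2) + α * ∑ b : ZMod p, Ψ (m * b) := by
    intro m
    rw [dft_eq_addChar]
    have : ∀ b : ZMod p, y b * Ψ (m * b) =
        (1 - α) * (((1/2) * Ψ (m * b) - (1/2) * (χ b * Ψ (m * b)))
          - (if b = 0 then (1/2 : ℂ) else 0) * Ψ (m * b)) + α * Ψ (m * b) := by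
      intro b
      rw [hy b, hxχ b]
      ring
    have hδ : ∑ b : ZMod p, (if b = 0 then (1/2 : ℂ) else 0) * Ψ (m * b) = 1/2 := by
      simp [ite_mul, hΨ0]
    rw [Finset.sum_congr rfl fun b _ => this b]
    simp only [Finset.sum_add_distrib, Finset.sum_sub_distrib, ← Finset.mul_sum]
    rw [hδ]
  -- value at 0
  have hΨsum0 : ∑ b : ZMod p, Ψ ((0 : ZMod p) * b) = (p : ℂ) := by
    simp [hΨ0, Finset.card_univ]
  have hdfty0 : dft y 0 = (1 - α) * (((p : ℂ) - 1)/2) + α * p := by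
    rw [hdfty 0, hΨsum0]
    have : ∑ b : ZMod p, χ b * Ψ ((0:ZMod p) * b) = 0 := by
      simp only [zero_mul, hΨ0, mul_one]
      exact hχsum
    rw [this]
    ring
  have hdftyne : ∀ m : ZMod p, m ≠ 0 → dft y m = (1 - α) * (-(1/2) - χ m * g / 2) := by
    intro m hm
    rw [hdfty m, hΨsum m hm, hshift m hm]
    ring
  -- properties of α
  set t : ℝ := -(((p : ℝ) - 1) / ((p : ℝ) + 1)) with htdef
  have hpp1 : (0:ℝ) < (p:ℝ) + 1 := by positivity
  have ht1 : -1 ≤ t := by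
    rw [htdef, neg_le, neg_neg, div_le_one hpp1]
    linarith
  have ht2 : t ≤ 1 := by
    rw [htdef]
    have h0 : (0:ℝ) ≤ ((p : ℝ) - 1) / ((p : ℝ) + 1) := by
      apply div_nonneg _ (le_of_lt hpp1)
      have : (3:ℝ) ≤ (p:ℝ) := by exact_mod_cast hp3
      linarith
    linarith
  have hαre : α.re = t := by
    rw [hα]
    simp [Complex.exp_re, Real.cos_arccos ht1 ht2]
  have hαim : α.im = Real.sin (Real.arccos t) := by
    rw [hα]
    simp [Complex.exp_im]
  have hαnorm : α.re ^ 2 + α.im ^ 2 = 1 := by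
    rw [hαre, hαim]
    have h := Real.sin_sq_add_cos_sq (Real.arccos t)
    rw [Real.cos_arccos ht1 ht2] at h
    linarith
  -- Gauss sum squared
  have hg2 : g ^ 2 = -(p : ℂ) := by
    rw [hgdef, gaussSum_sq hχ1 hquad hprim]
    have hcard : Fintype.card (ZMod p) = p := ZMod.card p
    have hχm1 : χ (-1) = -1 := by
      rw [hχval]
      rw [quadraticChar_neg_one hrc, hcard, ZMod.χ₄_nat_three_mod_four hp]
      norm_num
    rw [hχm1, hcard]
    ring
  have hgre : g.re = 0 := by
    have h1 : (g ^ 2).re = -(p:ℝ) := by rw [hg2]; simp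
    have h2 : (g ^ 2).im = 0 := by rw [hg2]; simp
    rw [pow_two, Complex.mul_re] at h1
    rw [pow_two, Complex.mul_im] at h2
    by_contra hne
    have hprod : g.re * g.im = 0 := by linarith
    have him : g.im = 0 := by
      rcases mul_eq_zero.mp hprod with h | h
      · exact absurd h hne
      · exact h
    rw [him] at h1
    have : (0:ℝ) < (p:ℝ) := by exact_mod_cast hprime.pos
    nlinarith
  have hgim : g.im ^ 2 = (p : ℝ) := by
    have h1 : (g ^ 2).re = -(p:ℝ) := by rw [hg2]; simp
    rw [pow_two, Complex.mul_re, hgre] at h1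
    linear_combination -h1
  -- the key claim: normSq of dft y is p everywhere
  have key : ∀ m : ZMod p, Complex.normSq (dft y m) = (p : ℝ) := by
    intro m
    rcases eq_or_ne m 0 with rfl | hm
    · have hpne : ((p:ℝ) + 1) ≠ 0 := ne_of_gt hpp1
      have ht' : t * ((p:ℝ) + 1) = -((p:ℝ) - 1) := by
        rw [htdef]; field_simp
      have hz : dft y 0 = ((((p:ℝ) - 1)/2 : ℝ) : ℂ) + α * ((((p:ℝ) + 1)/2 : ℝ) : ℂ) := by
        rw [hdfty0]; push_cast; ring
      rw [hz, Complex.normSq_apply]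
      simp only [Complex.add_re, Complex.add_im, Complex.mul_re, Complex.mul_im,
        Complex.ofReal_re, Complex.ofReal_im]
      rw [hαre]
      have hn := hαnorm
      rw [hαre] at hn
      linear_combination ((((p:ℝ) + 1)/2)^2) * hn + (((p:ℝ) - 1)/2) * ht'
    · rw [hdftyne m hm, Complex.normSq_mul]
      have hns1 : Complex.normSq (1 - α) = 2 - 2 * t := by
        rw [Complex.normSq_apply]
        simp only [Complex.sub_re, Complex.sub_im, Complex.one_re, Complex.one_im]
        rw [hαre]
        have hn := hαnorm
        rw [hαre] at hn
        linear_combination hn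
      have hε : χ m = 1 ∨ χ m = -1 := by
        rcases hquad m with h | h | h
        · exfalso
          have := hχsq m hm
          rw [h] at this
          simp at this
        · left; exact h
        · right; exact h
      have hns2 : Complex.normSq (-(1/2) - χ m * g / 2) = (1 + (p:ℝ)) / 4 := by
        have hfac : -(1/2 : ℂ) - χ m * g / 2 = (-1 - χ m * g) * (2⁻¹ : ℂ) := by ring
        rw [hfac, Complex.normSq_mul]
        have h2 : Complex.normSq (2⁻¹ : ℂ) = 1/4 := by
          norm_num [Complex.normSq_apply]
        rw [h2]
        rcases hε with h | h
        · rw [h, one_mul]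
          have hre2 : (-1 - g : ℂ).re = -1 - g.re := by simp
          have him2 : (-1 - g : ℂ).im = -g.im := by simp
          rw [Complex.normSq_apply, hre2, him2, hgre]
          linear_combination (1/4 : ℝ) * hgim
        · rw [h]
          have hre2 : (-1 - (-1) * g : ℂ).re = -1 + g.re := by simp
          have him2 : (-1 - (-1) * g : ℂ).im = g.im := by simp
          rw [Complex.normSq_apply, hre2, him2, hgre]
          linear_combination (1/4 : ℝ) * hgim
      rw [hns1, hns2]
      have hpne : ((p:ℝ) + 1) ≠ 0 := ne_of_gt hpp1
      have ht' : t * ((p:ℝ) + 1) = -((p:ℝ) - 1) := by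
        rw [htdef]; field_simp
      linear_combination (-(1/2 : ℝ)) * ht'
  rw [Complex.norm_def, Complex.norm_def, key m₁, key m₂]
end
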